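/- Let d ≥ 1, Θ > 0, v_max > 0, ω_min > 0, ε > 0, let E : ℝ^d → ℝ^d be measurable with G := sup_x |E(x)| < ∞, and set C₂ := G v_max/Θ and C₁ := C₂²/ω_min. Let f : ℝ^d × ℝ^d → ℝ be measurable with ‖f‖_{M⁻¹}² < ∞, f(x,·) integrable for a.e. x, and f(x,v) = 0 whenever |v| > v_max; set ρ(x) = ∫_{ℝ^d} f(x,v) dv and g = f − M_Θ ρ, and assume ‖g‖_{M⁻¹}² < ∞ and the relevant integrals are absolutely convergent. If ε ≤ ω_min / C₂, then | ∫_{ℝ^d} E(x) · ( ∫_{|v|≤v_max} (v/Θ) g(x,v)² M_Θ(v)^{−1} dv + 2 ρ(x) ∫_{|v|≤v_max} (v/Θ) g(x,v) dv ) dx | ≤ C₁ ε ‖f‖_{M⁻¹}² + ( C₂ + ω_min/ε ) ‖g‖_{M⁻¹}². -/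

import Mathlib

open MeasureTheory Real

abbrev Euc (d : ℕ) := EuclideanSpace ℝ (Fin d)

/-- The Maxwellian with temperature `Θ` in dimension `d`. -/
noncomputable def maxwellian (d : ℕ) (Θ : ℝ) (v : Euc d) : ℝ :=
  (2 * Real.pi * Θ) ^ (-(d : ℝ) / 2) * Real.exp (-‖v‖ ^ 2 / (2 * Θ))

/-- The squared weighted norm `‖f‖_{M⁻¹}²`. -/
noncomputable def wnormSq (d : ℕ) (Θ : ℝ) (f : Euc d → Euc d → ℝ) : ℝ :=
  ∫ x, ∫ v, (f x v) ^ 2 / maxwellian d Θ v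

lemma maxwellian_pos {d : ℕ} {Θ : ℝ} (hΘ : 0 < Θ) (v : Euc d) : 0 < maxwellian d Θ v := by
  unfold maxwellian
  have : (0:ℝ) < 2 * Real.pi * Θ := by positivity
  positivity

lemma maxwellian_measurable (d : ℕ) (Θ : ℝ) : Measurable (maxwellian d Θ) := by
  unfold maxwellian; fun_prop

lemma integrable_maxwellian (d : ℕ) {Θ : ℝ} (hΘ : 0 < Θ) : Integrable (maxwellian d Θ) := by
  have hb : (0:ℝ) < (2*Θ)⁻¹ := by positivity
  have h := (GaussianFourier.integrable_cexp_neg_mul_sq_norm_add (V := Euc d)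
    (b := ((2*Θ)⁻¹ : ℂ)) (by simpa using hb) 0 0).norm
  unfold maxwellian
  apply Integrable.const_mul
  convert h using 2 with v
  rw [Complex.norm_exp]
  congr 1
  have : (-(2*(Θ:ℂ))⁻¹ * (‖v‖:ℂ)^2 + 0 * ((inner ℝ (0:Euc d) v : ℝ):ℂ))
      = ((-‖v‖^2/(2*Θ) : ℝ) : ℂ) := by
    push_cast
    field_simp
    simp
  rw [this, Complex.ofReal_re]

lemma integral_maxwellian (d : ℕ) {Θ : ℝ} (hΘ : 0 < Θ) :
    ∫ v : Euc d, maxwellian d Θ v = 1 := by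
  have hb : (0:ℝ) < (2*Θ)⁻¹ := by positivity
  have h := GaussianFourier.integral_rexp_neg_mul_sq_norm (V := Euc d) hb
  rw [finrank_euclideanSpace_fin] at h
  unfold maxwellian
  rw [integral_const_mul]
  have heq : (fun v : Euc d => rexp (-‖v‖ ^ 2 / (2*Θ)))
      = fun v : Euc d => rexp (-(2*Θ)⁻¹ * ‖v‖ ^ 2) := by
    funext v; congr 1; field_simp
  rw [heq, h]
  have hπ : Real.pi / (2*Θ)⁻¹ = 2 * Real.pi * Θ := by field_simp
  rw [hπ, ← Real.rpow_add (by positivity)]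
  rw [neg_div, neg_add_cancel, Real.rpow_zero]

lemma cs_aux {β : Type*} [MeasurableSpace β] {μ : Measure β} {u w : β → ℝ}
    (hw : ∀ v, 0 < w v) (hu : AEStronglyMeasurable u μ)
    (h1 : Integrable (fun v => u v ^ 2 / w v) μ) (h2 : Integrable w μ) :
    (∫ v, |u v| ∂μ) ^ 2 ≤ (∫ v, u v ^ 2 / w v ∂μ) * ∫ v, w v ∂μ := by
  set a : β → ℝ := fun v => |u v| / Real.sqrt (w v) with ha
  set b : β → ℝ := fun v => Real.sqrt (w v) with hbdef
  have hwm : AEStronglyMeasurable w μ := h2.aestronglyMeasurable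
  have hbm : AEStronglyMeasurable b μ := Real.continuous_sqrt.comp_aestronglyMeasurable hwm
  have ham : AEStronglyMeasurable a μ :=
    ((measurable_abs.comp_aemeasurable hu.aemeasurable).div hbm.aemeasurable).aestronglyMeasurable
  have ha2 : ∀ v, a v ^ 2 = u v ^ 2 / w v := fun v => by
    simp only [ha, div_pow, sq_abs, Real.sq_sqrt (hw v).le]
  have hb2 : ∀ v, b v ^ 2 = w v := fun v => Real.sq_sqrt (hw v).le
  have hma : MemLp a (ENNReal.ofReal 2) μ := by
    rw [show ENNReal.ofReal 2 = 2 by norm_num]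
    exact (memLp_two_iff_integrable_sq ham).2 (by simp only [ha2]; exact h1)
  have hmb : MemLp b (ENNReal.ofReal 2) μ := by
    rw [show ENNReal.ofReal 2 = 2 by norm_num]
    exact (memLp_two_iff_integrable_sq hbm).2 (by simp only [hb2]; exact h2)
  have hpq : Real.HolderConjugate 2 2 := ⟨by norm_num, by norm_num, by norm_num⟩
  have hCS := integral_mul_le_Lp_mul_Lq_of_nonneg (μ := μ) hpq
    (Filter.Eventually.of_forall fun v => by positivity)
    (Filter.Eventually.of_forall fun v => Real.sqrt_nonneg _) hma hmb
  have hab : ∀ v, a v * b v = |u v| := fun v =>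
    div_mul_cancel₀ _ (Real.sqrt_pos.2 (hw v)).ne'
  have hrp : ∀ x : ℝ, x ^ (2:ℝ) = x ^ 2 := fun x => by
    rw [show (2:ℝ) = ((2:ℕ):ℝ) by norm_num, Real.rpow_natCast]
  simp only [hrp, hab, ha2, hb2, show ∀ v, a v * Real.sqrt (w v) = |u v| from hab,
    show ∀ v, Real.sqrt (w v) ^ 2 = w v from hb2] at hCS
  have hXn : 0 ≤ ∫ v, u v ^ 2 / w v ∂μ :=
    integral_nonneg fun v => div_nonneg (sq_nonneg _) (hw v).le
  have hYn : 0 ≤ ∫ v, w v ∂μ := integral_nonneg fun v => (hw v).le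
  have h0 : 0 ≤ ∫ v, |u v| ∂μ := integral_nonneg fun v => abs_nonneg _
  calc (∫ v, |u v| ∂μ) ^ 2
      ≤ ((∫ v, u v ^ 2 / w v ∂μ) ^ (1/2:ℝ) * (∫ v, w v ∂μ) ^ (1/2:ℝ)) ^ 2 :=
        pow_le_pow_left₀ h0 hCS 2
    _ = (∫ v, u v ^ 2 / w v ∂μ) * ∫ v, w v ∂μ := by
        rw [← Real.sqrt_eq_rpow, ← Real.sqrt_eq_rpow, mul_pow,
          Real.sq_sqrt hXn, Real.sq_sqrt hYn]

/-- Case 2 estimate (equation (2.11)) in the proof of Theorem 2.1. -/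
theorem drift_term_case2_bound
    (d : ℕ) (hd : 1 ≤ d) (Θ vmax ωmin ε G C₁ C₂ : ℝ)
    (hΘ : 0 < Θ) (hvmax : 0 < vmax) (hωmin : 0 < ωmin) (hε : 0 < ε)
    (hC₂ : C₂ = G * vmax / Θ) (hC₁ : C₁ = C₂ ^ 2 / ωmin)
    (E : Euc d → Euc d) (hEmeas : Measurable E) (hG : ∀ x, ‖E x‖ ≤ G)
    (f : Euc d → Euc d → ℝ)
    (hmeas : Measurable (fun p : Euc d × Euc d => f p.1 p.2))
    (hffin : Integrable (fun p : Euc d × Euc d => (f p.1 p.2) ^ 2 / maxwellian d Θ p.2))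
    (hintv : ∀ᵐ x : Euc d, Integrable (f x))
    (hsupp : ∀ x v, vmax < ‖v‖ → f x v = 0)
    (ρ : Euc d → ℝ) (hρ : ∀ x, ρ x = ∫ v, f x v)
    (g : Euc d → Euc d → ℝ) (hg : ∀ x v, g x v = f x v - maxwellian d Θ v * ρ x)
    (hgfin : Integrable (fun p : Euc d × Euc d => (g p.1 p.2) ^ 2 / maxwellian d Θ p.2))
    (hconv : Integrable (fun x => (inner ℝ (E x)
        ((∫ v in {v : Euc d | ‖v‖ ≤ vmax}, ((g x v) ^ 2 / (Θ * maxwellian d Θ v)) • v)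
          + (2 * ρ x) • ∫ v in {v : Euc d | ‖v‖ ≤ vmax}, (g x v / Θ) • v) : ℝ)))
    (hεsmall : ε ≤ ωmin / C₂) :
    |∫ x, (inner ℝ (E x)
        ((∫ v in {v : Euc d | ‖v‖ ≤ vmax}, ((g x v) ^ 2 / (Θ * maxwellian d Θ v)) • v)
          + (2 * ρ x) • ∫ v in {v : Euc d | ‖v‖ ≤ vmax}, (g x v / Θ) • v) : ℝ)|
      ≤ C₁ * ε * wnormSq d Θ f + (C₂ + ωmin / ε) * wnormSq d Θ g := by
  set M := maxwellian d Θ with hMdef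
  have hMpos : ∀ v : Euc d, 0 < M v := maxwellian_pos hΘ
  have hMmeas : Measurable M := maxwellian_measurable d Θ
  have hMint : Integrable M := integrable_maxwellian d hΘ
  have hMone : ∫ v : Euc d, M v = 1 := integral_maxwellian d hΘ
  have hG0 : 0 ≤ G := le_trans (norm_nonneg _) (hG 0)
  have hC₂0 : 0 ≤ C₂ := by rw [hC₂]; positivity
  have hC₁0 : 0 ≤ C₁ := by rw [hC₁]; positivity
  set S : Set (Euc d) := {v : Euc d | ‖v‖ ≤ vmax} with hSdef
  have hS : MeasurableSet S := measurableSet_le measurable_norm measurable_const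
  have hffin' : Integrable (fun p : Euc d × Euc d => f p.1 p.2 ^ 2 / M p.2)
      (volume.prod volume) := by rwa [← Measure.volume_eq_prod]
  have hgfin' : Integrable (fun p : Euc d × Euc d => g p.1 p.2 ^ 2 / M p.2)
      (volume.prod volume) := by rwa [← Measure.volume_eq_prod]
  have hfae : ∀ᵐ x : Euc d, Integrable (fun v => f x v ^ 2 / M v) := hffin'.prod_right_ae
  have hgae : ∀ᵐ x : Euc d, Integrable (fun v => g x v ^ 2 / M v) := hgfin'.prod_right_ae
  have hXint : Integrable (fun x : Euc d => ∫ v, f x v ^ 2 / M v) := hffin'.integral_prod_left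
  have hYint : Integrable (fun x : Euc d => ∫ v, g x v ^ 2 / M v) := hgfin'.integral_prod_left
  have hfxm : ∀ x : Euc d, Measurable (f x) := fun x => hmeas.comp measurable_prodMk_left
  have hgxm : ∀ x : Euc d, Measurable (g x) := fun x => by
    have hgeq : g x = fun v => f x v - M v * ρ x := funext fun v => hg x v
    rw [hgeq]; exact (hfxm x).sub (hMmeas.mul_const _)
  have hBint : Integrable (fun x : Euc d => C₁ * ε * (∫ v, f x v ^ 2 / M v)
      + (C₂ + ωmin / ε) * (∫ v, g x v ^ 2 / M v)) :=
    (hXint.const_mul _).add (hYint.const_mul _)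
  have hpt : ∀ᵐ x : Euc d, |(inner ℝ (E x)
      ((∫ v in S, ((g x v) ^ 2 / (Θ * M v)) • v)
        + (2 * ρ x) • ∫ v in S, (g x v / Θ) • v) : ℝ)|
      ≤ C₁ * ε * (∫ v, f x v ^ 2 / M v) + (C₂ + ωmin / ε) * (∫ v, g x v ^ 2 / M v) := by
    filter_upwards [hintv, hfae, hgae] with x hfi hfq hgq
    set qsq := ∫ v, g x v ^ 2 / M v with hqsq
    have hq0 : 0 ≤ qsq := integral_nonneg fun v => div_nonneg (sq_nonneg _) (hMpos v).le
    have hX0 : 0 ≤ ∫ v, f x v ^ 2 / M v :=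
      integral_nonneg fun v => div_nonneg (sq_nonneg _) (hMpos v).le
    have hgi : Integrable (g x) := by
      have hgeq : g x = fun v => f x v - M v * ρ x := funext fun v => hg x v
      rw [hgeq]; exact hfi.sub (hMint.mul_const _)
    -- Step A
    have hcnn : ∀ v : Euc d, 0 ≤ g x v ^ 2 / (Θ * M v) := fun v =>
      div_nonneg (sq_nonneg _) (mul_nonneg hΘ.le (hMpos v).le)
    have hstepA : ‖∫ v in S, ((g x v) ^ 2 / (Θ * M v)) • v‖ ≤ vmax / Θ * qsq := by
      have hceq : (fun v : Euc d => g x v ^ 2 / (Θ * M v))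
          = fun v => (g x v ^ 2 / M v) / Θ := funext fun v => div_mul_eq_div_div_swap _ _ _
      have hcint : Integrable (fun v : Euc d => g x v ^ 2 / (Θ * M v)) := by
        rw [hceq]; exact hgq.div_const Θ
      have hcm : Measurable (fun v : Euc d => g x v ^ 2 / (Θ * M v)) :=
        ((hgxm x).pow_const 2).div (hMmeas.const_mul Θ)
      have hint2 : IntegrableOn (fun v : Euc d => g x v ^ 2 / (Θ * M v) * vmax) S :=
        hcint.integrableOn.mul_const _
      have hint1 : IntegrableOn (fun v : Euc d => g x v ^ 2 / (Θ * M v) * ‖v‖) S := by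
        refine hint2.mono' ((hcm.mul measurable_norm).aestronglyMeasurable.restrict) ?_
        filter_upwards [ae_restrict_mem hS] with v hv
        rw [Real.norm_eq_abs, abs_of_nonneg (mul_nonneg (hcnn v) (norm_nonneg _))]
        exact mul_le_mul_of_nonneg_left hv (hcnn v)
      calc ‖∫ v in S, ((g x v) ^ 2 / (Θ * M v)) • v‖
          ≤ ∫ v in S, ‖((g x v) ^ 2 / (Θ * M v)) • v‖ := norm_integral_le_integral_norm _
        _ = ∫ v in S, g x v ^ 2 / (Θ * M v) * ‖v‖ := by
            refine integral_congr_ae (Filter.Eventually.of_forall fun v => ?_)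
            simp only [norm_smul, Real.norm_eq_abs, abs_of_nonneg (hcnn v)]
        _ ≤ ∫ v in S, g x v ^ 2 / (Θ * M v) * vmax :=
            setIntegral_mono_on hint1 hint2 hS fun v hv =>
              mul_le_mul_of_nonneg_left hv (hcnn v)
        _ = (∫ v in S, g x v ^ 2 / (Θ * M v)) * vmax := integral_mul_const _ _
        _ ≤ (∫ v, g x v ^ 2 / (Θ * M v)) * vmax := by
            refine mul_le_mul_of_nonneg_right ?_ hvmax.le
            exact setIntegral_le_integral hcint (Filter.Eventually.of_forall hcnn)
        _ = vmax / Θ * qsq := by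
            rw [hceq, integral_div]; ring
    -- Cauchy-Schwarz on the ball
    have hcsS : ∫ v in S, |g x v| ≤ Real.sqrt qsq := by
      have hcs := cs_aux (μ := volume.restrict S) hMpos
        (hgxm x).aestronglyMeasurable.restrict hgq.integrableOn hMint.integrableOn
      have hMS1 : ∫ v in S, M v ≤ 1 := hMone ▸ setIntegral_le_integral hMint
        (Filter.Eventually.of_forall fun v => (hMpos v).le)
      have hMS0 : 0 ≤ ∫ v in S, M v := integral_nonneg fun v => (hMpos v).le
      have hq2 : ∫ v in S, g x v ^ 2 / M v ≤ qsq := setIntegral_le_integral hgq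
        (Filter.Eventually.of_forall fun v => div_nonneg (sq_nonneg _) (hMpos v).le)
      have h0S : 0 ≤ ∫ v in S, |g x v| := integral_nonneg fun v => abs_nonneg _
      rw [Real.le_sqrt h0S hq0]
      calc (∫ v in S, |g x v|) ^ 2
          ≤ (∫ v in S, g x v ^ 2 / M v) * ∫ v in S, M v := hcs
        _ ≤ qsq * 1 := mul_le_mul hq2 hMS1 hMS0 hq0
        _ = qsq := mul_one _
    -- Step B
    have hstepB : ‖∫ v in S, (g x v / Θ) • v‖ ≤ vmax / Θ * Real.sqrt qsq := by
      have hint2 : IntegrableOn (fun v : Euc d => |g x v| * (vmax / Θ)) S :=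
        hgi.abs.integrableOn.mul_const _
      have hint1 : IntegrableOn (fun v : Euc d => |g x v / Θ| * ‖v‖) S := by
        refine hint2.mono'
          ((((hgxm x).div_const Θ).abs.mul measurable_norm).aestronglyMeasurable.restrict) ?_
        filter_upwards [ae_restrict_mem hS] with v hv
        rw [Real.norm_eq_abs, abs_of_nonneg (mul_nonneg (abs_nonneg _) (norm_nonneg _))]
        calc |g x v / Θ| * ‖v‖ ≤ |g x v / Θ| * vmax :=
              mul_le_mul_of_nonneg_left hv (abs_nonneg _)
          _ = |g x v| * (vmax / Θ) := by rw [abs_div, abs_of_pos hΘ]; ring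
      calc ‖∫ v in S, (g x v / Θ) • v‖
          ≤ ∫ v in S, ‖(g x v / Θ) • v‖ := norm_integral_le_integral_norm _
        _ = ∫ v in S, |g x v / Θ| * ‖v‖ := by
            refine integral_congr_ae (Filter.Eventually.of_forall fun v => ?_)
            simp only [norm_smul, Real.norm_eq_abs]
        _ ≤ ∫ v in S, |g x v| * (vmax / Θ) := by
            refine setIntegral_mono_on hint1 hint2 hS fun v hv => ?_
            calc |g x v / Θ| * ‖v‖ ≤ |g x v / Θ| * vmax :=
                  mul_le_mul_of_nonneg_left hv (abs_nonneg _)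
              _ = |g x v| * (vmax / Θ) := by rw [abs_div, abs_of_pos hΘ]; ring
        _ = (∫ v in S, |g x v|) * (vmax / Θ) := integral_mul_const _ _
        _ ≤ Real.sqrt qsq * (vmax / Θ) :=
            mul_le_mul_of_nonneg_right hcsS (by positivity)
        _ = vmax / Θ * Real.sqrt qsq := mul_comm _ _
    -- rho bound
    have hρsq : ρ x ^ 2 ≤ ∫ v, f x v ^ 2 / M v := by
      have habs : |ρ x| ≤ ∫ v, |f x v| := by
        rw [hρ x, ← Real.norm_eq_abs]
        refine (norm_integral_le_integral_norm _).trans (le_of_eq ?_)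
        simp [Real.norm_eq_abs]
      have hcs := cs_aux (μ := volume) hMpos (hfxm x).aestronglyMeasurable hfq hMint
      calc ρ x ^ 2 = |ρ x| ^ 2 := (sq_abs _).symm
        _ ≤ (∫ v, |f x v|) ^ 2 := pow_le_pow_left₀ (abs_nonneg _) habs 2
        _ ≤ (∫ v, f x v ^ 2 / M v) * ∫ v, M v := hcs
        _ = ∫ v, f x v ^ 2 / M v := by rw [hMone, mul_one]
    -- AM-GM
    have hamgm : 2 * C₂ * |ρ x| * Real.sqrt qsq ≤ C₁ * ε * ρ x ^ 2 + ωmin / ε * qsq := by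
      have h := two_mul_le_add_sq (Real.sqrt (C₁ * ε) * |ρ x|)
        (Real.sqrt (ωmin / ε) * Real.sqrt qsq)
      have e1 : Real.sqrt (C₁ * ε) * Real.sqrt (ωmin / ε) = C₂ := by
        rw [← Real.sqrt_mul (by positivity)]
        have e2 : C₁ * ε * (ωmin / ε) = C₂ ^ 2 := by
          rw [hC₁]; field_simp
        rw [e2, Real.sqrt_sq hC₂0]
      have lhs : 2 * (Real.sqrt (C₁ * ε) * |ρ x|) * (Real.sqrt (ωmin / ε) * Real.sqrt qsq)
          = 2 * C₂ * |ρ x| * Real.sqrt qsq := by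
        rw [show 2 * (Real.sqrt (C₁ * ε) * |ρ x|) * (Real.sqrt (ωmin / ε) * Real.sqrt qsq)
            = 2 * (Real.sqrt (C₁ * ε) * Real.sqrt (ωmin / ε)) * |ρ x| * Real.sqrt qsq by ring,
          e1]
      have r1 : (Real.sqrt (C₁ * ε) * |ρ x|) ^ 2 = C₁ * ε * ρ x ^ 2 := by
        rw [mul_pow, Real.sq_sqrt (by positivity), sq_abs]
      have r2 : (Real.sqrt (ωmin / ε) * Real.sqrt qsq) ^ 2 = ωmin / ε * qsq := by
        rw [mul_pow, Real.sq_sqrt (by positivity), Real.sq_sqrt hq0]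
      rw [lhs, r1, r2] at h
      exact h
    have h2abs : |2 * ρ x| = 2 * |ρ x| := by rw [abs_mul, abs_two]
    calc |(inner ℝ (E x)
        ((∫ v in S, ((g x v) ^ 2 / (Θ * M v)) • v)
          + (2 * ρ x) • ∫ v in S, (g x v / Θ) • v) : ℝ)|
        ≤ ‖E x‖ * ‖(∫ v in S, ((g x v) ^ 2 / (Θ * M v)) • v)
            + (2 * ρ x) • ∫ v in S, (g x v / Θ) • v‖ := abs_real_inner_le_norm _ _
      _ ≤ G * (‖∫ v in S, ((g x v) ^ 2 / (Θ * M v)) • v‖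
            + ‖(2 * ρ x) • ∫ v in S, (g x v / Θ) • v‖) :=
          mul_le_mul (hG x) (norm_add_le _ _) (norm_nonneg _) hG0
      _ = G * ‖∫ v in S, ((g x v) ^ 2 / (Θ * M v)) • v‖
            + G * (|2 * ρ x| * ‖∫ v in S, (g x v / Θ) • v‖) := by
          rw [norm_smul, Real.norm_eq_abs]; ring
      _ ≤ G * (vmax / Θ * qsq) + G * (|2 * ρ x| * (vmax / Θ * Real.sqrt qsq)) := by
          gcongr
      _ = C₂ * qsq + 2 * C₂ * |ρ x| * Real.sqrt qsq := by
          rw [hC₂, h2abs]; ring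
      _ ≤ C₂ * qsq + (C₁ * ε * ρ x ^ 2 + ωmin / ε * qsq) := by linarith
      _ ≤ C₁ * ε * (∫ v, f x v ^ 2 / M v) + (C₂ + ωmin / ε) * qsq := by
          have hmul : C₁ * ε * ρ x ^ 2 ≤ C₁ * ε * (∫ v, f x v ^ 2 / M v) :=
            mul_le_mul_of_nonneg_left hρsq (by positivity)
          linarith
      _ = C₁ * ε * (∫ v, f x v ^ 2 / M v) + (C₂ + ωmin / ε) * (∫ v, g x v ^ 2 / M v) := rfl
  calc |∫ x, (inner ℝ (E x)
      ((∫ v in S, ((g x v) ^ 2 / (Θ * M v)) • v)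
        + (2 * ρ x) • ∫ v in S, (g x v / Θ) • v) : ℝ)|
      ≤ ∫ x, |(inner ℝ (E x)
        ((∫ v in S, ((g x v) ^ 2 / (Θ * M v)) • v)
          + (2 * ρ x) • ∫ v in S, (g x v / Θ) • v) : ℝ)| := by
        rw [← Real.norm_eq_abs]
        refine (norm_integral_le_integral_norm _).trans (le_of_eq ?_)
        simp [Real.norm_eq_abs]
    _ ≤ ∫ x, (C₁ * ε * (∫ v, f x v ^ 2 / M v)
          + (C₂ + ωmin / ε) * (∫ v, g x v ^ 2 / M v)) :=
        integral_mono_ae hconv.abs hBint hpt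
    _ = C₁ * ε * wnormSq d Θ f + (C₂ + ωmin / ε) * wnormSq d Θ g := by
        rw [integral_add (hXint.const_mul _) (hYint.const_mul _),
          integral_const_mul, integral_const_mul]
        unfold wnormSq
        rw [← hMdef]
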